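/- Let G be a finitely generated group containing a finitely generated free subgroup of finite index (i.e. there is a subgroup H ≤ G of finite index and an isomorphism H ≅ FreeGroup (Fin n) for some n), and let σ : Σ* → G be a surjective monoid homomorphism from a free monoid over a finite alphabet. Then the word problem σ⁻¹(1) ⊆ Σ* is a context-free language. -/

import Mathlib

namespace MullerSchupp
open List

variable {β : Type} [DecidableEq β]

/-- A word is reduced: no adjacent cancelling pair. -/
def IsRed (l : List (β × Bool)) : Prop :=
  l.Chain' fun a b => ¬(a.1 = b.1 ∧ a.2 = !b.2)

lemma IsRed.reduce_eq {l : List (β × Bool)} (h : IsRed l) : FreeGroup.reduce l = l := by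
  induction l with
  | nil => rfl
  | cons p t ih =>
    have ht : IsRed t := h.tail
    rw [FreeGroup.reduce.cons, ih ht]
    cases t with
    | nil => rfl
    | cons q t' =>
      have hpq : ¬(p.1 = q.1 ∧ p.2 = !q.2) := (List.isChain_cons_cons.mp h).1
      show (if p.1 = q.1 ∧ p.2 = !q.2 then t' else p :: q :: t') = p :: q :: t'
      rw [if_neg hpq]

lemma isRed_reduce (l : List (β × Bool)) : IsRed (FreeGroup.reduce l) := by
  induction l with
  | nil => simp [IsRed, List.Chain']
  | cons p t ih =>
    rw [FreeGroup.reduce.cons]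
    rcases hr : FreeGroup.reduce t with _ | ⟨q, t'⟩
    · exact List.isChain_singleton p
    · rw [hr] at ih
      show IsRed (if p.1 = q.1 ∧ p.2 = !q.2 then t' else p :: q :: t')
      by_cases hc : p.1 = q.1 ∧ p.2 = !q.2
      · rw [if_pos hc]; exact ih.tail
      · rw [if_neg hc]; exact List.isChain_cons_cons.mpr ⟨hc, ih⟩

lemma isRed_toWord (x : FreeGroup β) : IsRed x.toWord := by
  rw [← FreeGroup.reduce_toWord]; exact isRed_reduce _

lemma toWord_mk_isRed {l : List (β × Bool)} (h : IsRed l) : (FreeGroup.mk l).toWord = l := by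
  rw [FreeGroup.toWord_mk, h.reduce_eq]

lemma norm_mk_isRed {l : List (β × Bool)} (h : IsRed l) :
    FreeGroup.norm (FreeGroup.mk l) = l.length := by
  show (FreeGroup.mk l).toWord.length = l.length
  rw [toWord_mk_isRed h]

lemma IsRed.invRev {l : List (β × Bool)} (h : IsRed l) : IsRed (FreeGroup.invRev l) := by
  unfold FreeGroup.invRev
  rw [IsRed]; unfold List.Chain'; rw [List.isChain_reverse, List.isChain_map]
  refine List.IsChain.imp ?_ h
  intro a b hab hcon
  simp only [flip, Bool.not_not] at hcon
  exact hab ⟨hcon.1.symm, hcon.2.symm⟩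

/-- No cancellation in the product `x⁻¹ * y`: the identity lies on a geodesic
from `x` to `y`. -/
def Mid (x y : FreeGroup β) : Prop :=
  FreeGroup.norm (x⁻¹ * y) = FreeGroup.norm x + FreeGroup.norm y

lemma mid_of_heads {x y : FreeGroup β}
    (h : ∀ p, ¬(x.toWord.head? = some p ∧ y.toWord.head? = some p)) : Mid x y := by
  have hprod : x⁻¹ * y = FreeGroup.mk (FreeGroup.invRev x.toWord ++ y.toWord) := by
    conv_lhs => rw [← FreeGroup.mk_toWord (x := x), ← FreeGroup.mk_toWord (x := y)]
    rw [FreeGroup.inv_mk, FreeGroup.mul_mk]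
  have hred : IsRed (FreeGroup.invRev x.toWord ++ y.toWord) := by
    rw [IsRed]; unfold List.Chain'; rw [List.isChain_append]
    refine ⟨(isRed_toWord x).invRev, isRed_toWord y, ?_⟩
    intro a ha b hb
    have hga : (FreeGroup.invRev x.toWord).getLast? = some a := ha
    have hhb : y.toWord.head? = some b := hb
    unfold FreeGroup.invRev at hga
    rw [List.getLast?_reverse, List.head?_map] at hga
    rcases hxh : x.toWord.head? with _ | p
    · rw [hxh] at hga; simp at hga
    · rw [hxh] at hga
      simp only [Option.map_some] at hga
      obtain rfl : a = (p.1, !p.2) := by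
        injection hga with h'; exact h'.symm
      rintro ⟨h1, h2⟩
      simp only [Bool.not_not] at h1 h2
      have hpb : p = b := Prod.ext_iff.mpr ⟨h1, by
        have := h2.symm
        cases hp2 : p.2 <;> cases hb2 : b.2 <;> simp_all⟩
      exact h p ⟨hxh, by rw [hpb]; exact hhb⟩
  unfold Mid
  rw [hprod, norm_mk_isRed hred, List.length_append, FreeGroup.invRev_length]
  rfl

lemma not_mid_of_heads {x y : FreeGroup β} {p : β × Bool}
    (hx : x.toWord.head? = some p) (hy : y.toWord.head? = some p) : ¬ Mid x y := by
  rcases hxw : x.toWord with _ | ⟨p1, s⟩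
  · rw [hxw] at hx; simp at hx
  rcases hyw : y.toWord with _ | ⟨p2, t⟩
  · rw [hyw] at hy; simp at hy
  rw [hxw] at hx; rw [hyw] at hy
  obtain rfl : p1 = p := by simpa using hx
  obtain rfl : p2 = p1 := by simpa using hy
  have hxm : x = FreeGroup.mk [p2] * FreeGroup.mk s := by
    rw [FreeGroup.mul_mk]
    conv_lhs => rw [← FreeGroup.mk_toWord (x := x), hxw]
    rfl
  have hym : y = FreeGroup.mk [p2] * FreeGroup.mk t := by
    rw [FreeGroup.mul_mk]
    conv_lhs => rw [← FreeGroup.mk_toWord (x := y), hyw]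
    rfl
  have hprod : x⁻¹ * y = (FreeGroup.mk s)⁻¹ * FreeGroup.mk t := by
    rw [hxm, hym]; group
  have hb : FreeGroup.norm (x⁻¹ * y) ≤ s.length + t.length := by
    rw [hprod]
    calc FreeGroup.norm ((FreeGroup.mk s)⁻¹ * FreeGroup.mk t)
        ≤ FreeGroup.norm (FreeGroup.mk s)⁻¹ + FreeGroup.norm (FreeGroup.mk t) :=
          FreeGroup.norm_mul_le _ _
      _ = FreeGroup.norm (FreeGroup.mk s) + FreeGroup.norm (FreeGroup.mk t) := by
          rw [FreeGroup.norm_inv_eq]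
      _ ≤ s.length + t.length := Nat.add_le_add FreeGroup.norm_mk_le FreeGroup.norm_mk_le
  have hnx : FreeGroup.norm x = s.length + 1 := by
    show x.toWord.length = s.length + 1
    rw [hxw]; simp
  have hny : FreeGroup.norm y = t.length + 1 := by
    show y.toWord.length = t.length + 1
    rw [hyw]; simp
  intro hmid
  unfold Mid at hmid
  rw [hnx, hny] at hmid
  omega

lemma heads_of_not_mid {x y : FreeGroup β} (h : ¬ Mid x y) :
    ∃ p, x.toWord.head? = some p ∧ y.toWord.head? = some p := by
  by_contra hc
  push_neg at hc
  exact h (mid_of_heads fun p hp => hc p hp.1 hp.2)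

lemma Mid.trichotomy {x y : FreeGroup β} (h : Mid x y) (z : FreeGroup β) :
    Mid x z ∨ Mid z y := by
  by_contra hc
  push_neg at hc
  obtain ⟨p, hx, hz⟩ := heads_of_not_mid hc.1
  obtain ⟨p', hz', hy⟩ := heads_of_not_mid hc.2
  rw [hz'] at hz
  obtain rfl : p' = p := by injection hz
  exact not_mid_of_heads hx hy h

/-- `v` lies on a geodesic from `a` to `b`. -/
def Between (v a b : FreeGroup β) : Prop :=
  FreeGroup.norm (a⁻¹ * v) + FreeGroup.norm (v⁻¹ * b) = FreeGroup.norm (a⁻¹ * b)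

lemma between_iff_mid {v a b : FreeGroup β} : Between v a b ↔ Mid (v⁻¹ * a) (v⁻¹ * b) := by
  have e1 : (v⁻¹ * a)⁻¹ * (v⁻¹ * b) = a⁻¹ * b := by group
  have e2 : FreeGroup.norm (v⁻¹ * a) = FreeGroup.norm (a⁻¹ * v) := by
    rw [← FreeGroup.norm_inv_eq]; congr 1; group
  unfold Between Mid
  rw [e1, e2]
  exact eq_comm

lemma Between.trichotomy {v a b : FreeGroup β} (h : Between v a b) (c : FreeGroup β) :
    Between v a c ∨ Between v c b := by
  rw [between_iff_mid] at *
  rw [between_iff_mid (v := v) (a := c) (b := b)]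
  exact Mid.trichotomy h _

lemma Between.left_le {v a b : FreeGroup β} (h : Between v a b) :
    FreeGroup.norm (a⁻¹ * v) ≤ FreeGroup.norm (a⁻¹ * b) := by
  unfold Between at h; omega

lemma Between.self_eq {v a : FreeGroup β} (h : Between v a a) : v = a := by
  unfold Between at h
  simp only [inv_mul_cancel, FreeGroup.norm_one] at h
  have h0 : FreeGroup.norm (a⁻¹ * v) = 0 := by omega
  rw [FreeGroup.norm_eq_zero] at h0
  exact (inv_mul_eq_one.mp h0).symm


/-- Key geometric lemma: a path in the free group with steps of norm at most `C`,
starting at `1` and ending at norm at most `4C+4`, has an interior point within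
`4C+4` of both endpoints. -/
lemma exists_split {C : ℕ} (m : ℕ) (f : ℕ → FreeGroup β) (h0 : f 0 = 1)
    (hstep : ∀ i, i < m → FreeGroup.norm ((f i)⁻¹ * f (i + 1)) ≤ C) (hm : 2 ≤ m)
    (hK : FreeGroup.norm (f m) ≤ 4 * C + 4) :
    ∃ i, 1 ≤ i ∧ i < m ∧ FreeGroup.norm (f i) ≤ 4 * C + 4 ∧
      FreeGroup.norm ((f i)⁻¹ * f m) ≤ 4 * C + 4 := by
  have hstep1 : FreeGroup.norm (f 1) ≤ C := by
    have := hstep 0 (by omega)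
    rwa [h0, inv_one, one_mul] at this
  by_cases hsmall : FreeGroup.norm (f m) ≤ 2 * C + 2
  · refine ⟨1, le_rfl, by omega, by omega, ?_⟩
    calc FreeGroup.norm ((f 1)⁻¹ * f m)
        ≤ FreeGroup.norm (f 1)⁻¹ + FreeGroup.norm (f m) := FreeGroup.norm_mul_le _ _
      _ = FreeGroup.norm (f 1) + FreeGroup.norm (f m) := by rw [FreeGroup.norm_inv_eq]
      _ ≤ 4 * C + 4 := by omega
  · push_neg at hsmall
    set L := FreeGroup.norm (f m) with hL
    set j := L / 2 with hj
    set u := (f m).toWord with hu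
    have hulen : u.length = L := rfl
    have hured : IsRed u := isRed_toWord _
    set v := FreeGroup.mk (u.take j) with hv
    have hjle : j ≤ L := by omega
    have hvnorm : FreeGroup.norm v = j := by
      rw [hv, norm_mk_isRed (hured.take j), List.length_take]
      omega
    have hsplitv : v * FreeGroup.mk (u.drop j) = f m := by
      rw [hv, FreeGroup.mul_mk, List.take_append_drop, hu, FreeGroup.mk_toWord]
    have hrest : FreeGroup.norm (v⁻¹ * f m) = L - j := by
      rw [← hsplitv, inv_mul_cancel_left, norm_mk_isRed (hured.drop j), List.length_drop]
      omega
    have hbase : Between v (f 0) (f m) := by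
      unfold Between
      rw [h0]
      simp only [inv_one, one_mul]
      rw [hrest, hvnorm]
      omega
    -- find a crossing point
    have hcross : ∃ i, i < m ∧ FreeGroup.norm ((f i)⁻¹ * v) ≤ C := by
      by_contra hno
      push_neg at hno
      have W : ∀ k, k ≤ m → Between v (f k) (f m) := by
        intro k
        induction k with
        | zero => intro _; exact hbase
        | succ k ih =>
          intro hk1
          have hkm : k < m := by omega
          have hb := ih (by omega)
          rcases hb.trichotomy (f (k + 1)) with h | h
          · exfalso
            have h1 : FreeGroup.norm ((f k)⁻¹ * v) ≤ FreeGroup.norm ((f k)⁻¹ * f (k + 1)) :=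
              h.left_le
            have h2 := hstep k hkm
            have h3 := hno k hkm
            omega
          · exact h
      have hvm : v = f m := (W m le_rfl).self_eq
      obtain ⟨m', rfl⟩ : ∃ m', m = m' + 1 := ⟨m - 1, by omega⟩
      have : FreeGroup.norm ((f m')⁻¹ * v) ≤ C := by
        rw [hvm]; exact hstep m' (by omega)
      have := hno m' (by omega)
      omega
    obtain ⟨i, him, hiv⟩ := hcross
    have hjC : C + 1 ≤ j := by omega
    have hi1 : 1 ≤ i := by
      rcases Nat.eq_zero_or_pos i with rfl | h
      · exfalso
        rw [h0, inv_one, one_mul, hvnorm] at hiv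
        omega
      · exact h
    have hfi : FreeGroup.norm (f i) ≤ 4 * C + 4 := by
      have h1 : FreeGroup.norm (f i) = FreeGroup.norm (v * (v⁻¹ * f i)) := by
        rw [mul_inv_cancel_left]
      have h2 : FreeGroup.norm (v⁻¹ * f i) = FreeGroup.norm ((f i)⁻¹ * v) := by
        rw [← FreeGroup.norm_inv_eq]; congr 1; group
      have h3 := FreeGroup.norm_mul_le v (v⁻¹ * f i)
      rw [← h1, h2, hvnorm] at h3
      omega
    have hfim : FreeGroup.norm ((f i)⁻¹ * f m) ≤ 4 * C + 4 := by
      have h1 : (f i)⁻¹ * f m = ((f i)⁻¹ * v) * (v⁻¹ * f m) := by group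
      have h2 := FreeGroup.norm_mul_le ((f i)⁻¹ * v) (v⁻¹ * f m)
      rw [← h1, hrest] at h2
      omega
    exact ⟨i, hi1, him, hfi, hfim⟩


/-! ### Group-theoretic setup -/

section GroupSetup

variable {α : Type} {G : Type} [Group G] (H : Subgroup G) {n : ℕ}
  (e : H ≃* FreeGroup (Fin n)) (σ : FreeMonoid α →* G)

/-- The set of right cosets of `H`. -/
abbrev Q := Quotient (QuotientGroup.rightRel H)

/-- The right coset of an element. -/
def qmk (g : G) : Q H := Quotient.mk'' g

/-- A representative of a right coset. -/
noncomputable def rep (q : Q H) : G := q.out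

lemma qmk_rep (q : Q H) : qmk H (rep H q) = q := Quotient.out_eq' q

lemma mem_of_qmk_eq {g g' : G} (h : qmk H g = qmk H g') : g' * g⁻¹ ∈ H :=
  QuotientGroup.rightRel_apply.mp (Quotient.eq''.mp h)

lemma qmk_hmul (h : H) (g : G) : qmk H ((h : G) * g) = qmk H g := by
  apply Quotient.sound'
  apply QuotientGroup.rightRel_apply.mpr
  have hgg : g * ((h : G) * g)⁻¹ = (h : G)⁻¹ := by group
  rw [hgg]
  exact H.inv_mem h.2

/-- The `H`-part of `g`: the unique `h ∈ H` with `g = h * rep (qmk g)`. -/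
noncomputable def hpart (g : G) : H :=
  ⟨g * (rep H (qmk H g))⁻¹, mem_of_qmk_eq H (qmk_rep H (qmk H g))⟩

lemma hpart_mul_rep (g : G) : (hpart H g : G) * rep H (qmk H g) = g := by
  simp [hpart]

lemma hpart_hmul (h : H) (g : G) : hpart H ((h : G) * g) = h * hpart H g := by
  apply Subtype.ext
  show ((h : G) * g) * (rep H (qmk H ((h : G) * g)))⁻¹ = (h : G) * (g * (rep H (qmk H g))⁻¹)
  rw [qmk_hmul, mul_assoc]

lemma hpart_rep (q : Q H) : hpart H (rep H q) = 1 := by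
  apply Subtype.ext
  show rep H q * (rep H (qmk H (rep H q)))⁻¹ = ((1 : H) : G)
  rw [qmk_rep]
  simp

/-- The coset reached from coset `q` after reading letter `a`. -/
noncomputable def mustep (q : Q H) (a : α) : Q H := qmk H (rep H q * σ (FreeMonoid.of a))

/-- The free-group element produced when reading letter `a` from coset `q`. -/
noncomputable def xstep (q : Q H) (a : α) : FreeGroup (Fin n) :=
  e (hpart H (rep H q * σ (FreeMonoid.of a)))

lemma rep_mul_of (q : Q H) (a : α) :
    rep H q * σ (FreeMonoid.of a)
      = ((e.symm (xstep H e σ q a) : H) : G) * rep H (mustep H σ q a) := by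
  unfold xstep mustep
  rw [MulEquiv.symm_apply_apply]
  exact (hpart_mul_rep H _).symm

/-- Semantics of sentential forms: `Eval s q x q'` means that the string `s` transforms
coset `q` into coset `q'` while producing the free-group element `x`. -/
inductive Eval : List (Symbol α (Q H × FreeGroup (Fin n) × Q H)) →
    Q H → FreeGroup (Fin n) → Q H → Prop
  | nil (q) : Eval [] q 1 q
  | term (a) {s q y q'} : Eval s (mustep H σ q a) y q' →
      Eval (Symbol.terminal a :: s) q (xstep H e σ q a * y) q'
  | nt (r y r') {s z q'} : Eval s r' z q' →
      Eval (Symbol.nonterminal (r, y, r') :: s) r (y * z) q'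

lemma Eval.append {s t q y q'' z q'} (h1 : Eval H e σ s q y q'')
    (h2 : Eval H e σ t q'' z q') : Eval H e σ (s ++ t) q (y * z) q' := by
  induction h1 with
  | nil q => simpa using h2
  | term a h ih =>
    rw [List.cons_append, mul_assoc]
    exact .term a (ih h2)
  | nt r y r' h ih =>
    rw [List.cons_append, mul_assoc]
    exact .nt r _ r' (ih h2)

lemma Eval.split {s : List (Symbol α (Q H × FreeGroup (Fin n) × Q H))} {t q x q'}
    (h : Eval H e σ (s ++ t) q x q') :
    ∃ q'' y z, x = y * z ∧ Eval H e σ s q y q'' ∧ Eval H e σ t q'' z q' := by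
  induction s generalizing q x with
  | nil => exact ⟨q, 1, x, (one_mul x).symm, .nil q, h⟩
  | cons sym s ih =>
    cases h with
    | term a h' =>
      obtain ⟨q'', y, z, rfl, h1, h2⟩ := ih h'
      exact ⟨q'', _ * y, z, (mul_assoc _ _ _).symm, .term a h1, h2⟩
    | nt r y r' h' =>
      obtain ⟨q'', y', z, rfl, h1, h2⟩ := ih h'
      exact ⟨q'', _ * y', z, (mul_assoc _ _ _).symm, .nt _ _ _ h1, h2⟩

lemma Eval.singleton_nt {r y r' q x q'}
    (h : Eval H e σ [Symbol.nonterminal (r, y, r')] q x q') :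
    q = r ∧ x = y ∧ q' = r' := by
  cases h with
  | nt _ _ _ h' =>
    cases h' with
    | nil => exact ⟨rfl, mul_one y, rfl⟩

/-- The grammar rules. -/
noncomputable def rules (Qs : Finset (Q H)) (As : Finset α)
    (ball : Finset (FreeGroup (Fin n))) :
    Finset (ContextFreeRule α (Q H × FreeGroup (Fin n) × Q H)) :=
  letI : DecidableEq (ContextFreeRule α (Q H × FreeGroup (Fin n) × Q H)) := Classical.decEq _
  ((Qs ×ˢ Qs ×ˢ Qs) ×ˢ ball ×ˢ ball).image
      (fun p => ⟨(p.1.1, p.2.1 * p.2.2, p.1.2.1),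
        [Symbol.nonterminal (p.1.1, p.2.1, p.1.2.2),
         Symbol.nonterminal (p.1.2.2, p.2.2, p.1.2.1)]⟩) ∪
    (Qs ×ˢ As).image
      (fun p => ⟨(p.1, xstep H e σ p.1 p.2, mustep H σ p.1 p.2), [Symbol.terminal p.2]⟩) ∪
    Qs.image (fun q => ⟨(q, 1, q), []⟩)

lemma split_rule_mem {Qs : Finset (Q H)} {As : Finset α} {ball : Finset (FreeGroup (Fin n))}
    {q q' q'' : Q H} {x₁ x₂ : FreeGroup (Fin n)}
    (hq : q ∈ Qs) (hq' : q' ∈ Qs) (hq'' : q'' ∈ Qs) (hx₁ : x₁ ∈ ball) (hx₂ : x₂ ∈ ball) :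
    (⟨(q, x₁ * x₂, q'),
      [Symbol.nonterminal (q, x₁, q''), Symbol.nonterminal (q'', x₂, q')]⟩ :
      ContextFreeRule α (Q H × FreeGroup (Fin n) × Q H)) ∈ rules H e σ Qs As ball := by
  classical
  letI : DecidableEq (ContextFreeRule α (Q H × FreeGroup (Fin n) × Q H)) := Classical.decEq _
  unfold rules
  apply Finset.mem_union_left
  apply Finset.mem_union_left
  apply Finset.mem_image.mpr
  exact ⟨((q, q', q''), (x₁, x₂)), by simp [Finset.mem_product, hq, hq', hq'', hx₁, hx₂], rfl⟩

lemma term_rule_mem {Qs : Finset (Q H)} {As : Finset α} {ball : Finset (FreeGroup (Fin n))}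
    {q : Q H} {a : α} (hq : q ∈ Qs) (ha : a ∈ As) :
    (⟨(q, xstep H e σ q a, mustep H σ q a), [Symbol.terminal a]⟩ :
      ContextFreeRule α (Q H × FreeGroup (Fin n) × Q H)) ∈ rules H e σ Qs As ball := by
  classical
  letI : DecidableEq (ContextFreeRule α (Q H × FreeGroup (Fin n) × Q H)) := Classical.decEq _
  unfold rules
  apply Finset.mem_union_left
  apply Finset.mem_union_right
  apply Finset.mem_image.mpr
  exact ⟨(q, a), by simp [Finset.mem_product, hq, ha], rfl⟩

lemma eps_rule_mem {Qs : Finset (Q H)} {As : Finset α} {ball : Finset (FreeGroup (Fin n))}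
    {q : Q H} (hq : q ∈ Qs) :
    (⟨(q, 1, q), []⟩ : ContextFreeRule α (Q H × FreeGroup (Fin n) × Q H))
      ∈ rules H e σ Qs As ball := by
  classical
  letI : DecidableEq (ContextFreeRule α (Q H × FreeGroup (Fin n) × Q H)) := Classical.decEq _
  unfold rules
  apply Finset.mem_union_right
  exact Finset.mem_image.mpr ⟨q, hq, rfl⟩

lemma eval_output_of_mem {Qs : Finset (Q H)} {As : Finset α} {ball : Finset (FreeGroup (Fin n))}
    {r : ContextFreeRule α (Q H × FreeGroup (Fin n) × Q H)} (hr : r ∈ rules H e σ Qs As ball) :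
    Eval H e σ r.output r.input.1 r.input.2.1 r.input.2.2 := by
  classical
  letI : DecidableEq (ContextFreeRule α (Q H × FreeGroup (Fin n) × Q H)) := Classical.decEq _
  unfold rules at hr
  rcases Finset.mem_union.mp hr with hr' | hr'
  · rcases Finset.mem_union.mp hr' with hr'' | hr''
    · obtain ⟨p, -, rfl⟩ := Finset.mem_image.mp hr''
      have h2 : Eval H e σ [Symbol.nonterminal (p.1.2.2, p.2.2, p.1.2.1)]
          p.1.2.2 (p.2.2 * 1) p.1.2.1 := .nt _ _ _ (.nil _)
      rw [mul_one] at h2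
      exact .nt _ _ _ h2
    · obtain ⟨p, -, rfl⟩ := Finset.mem_image.mp hr''
      have h2 : Eval H e σ [Symbol.terminal p.2] p.1 (xstep H e σ p.1 p.2 * 1)
          (mustep H σ p.1 p.2) := .term _ (.nil _)
      rwa [mul_one] at h2
  · obtain ⟨q, -, rfl⟩ := Finset.mem_image.mp hr'
    exact .nil q

lemma eval_of_produces {R : Finset (ContextFreeRule α (Q H × FreeGroup (Fin n) × Q H))}
    (hR : ∀ r ∈ R, Eval H e σ r.output r.input.1 r.input.2.1 r.input.2.2)
    {u v : List (Symbol α (Q H × FreeGroup (Fin n) × Q H))}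
    (h : ∃ r ∈ R, r.Rewrites u v) {q x q'} (he : Eval H e σ u q x q') :
    Eval H e σ v q x q' := by
  obtain ⟨r, hrR, hrw⟩ := h
  obtain ⟨p, s, rfl, rfl⟩ := hrw.exists_parts
  rw [List.append_assoc] at he ⊢
  obtain ⟨q₁, y, z, rfl, h1, h23⟩ := Eval.split H e σ he
  obtain ⟨q₂, z1, z2, rfl, h2, h3⟩ := Eval.split H e σ h23
  rcases hri : r.input with ⟨r1, x0, r2⟩
  rw [hri] at h2
  obtain ⟨rfl, rfl, rfl⟩ := Eval.singleton_nt H e σ h2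
  have hout := hR r hrR
  rw [hri] at hout
  exact Eval.append H e σ h1 (Eval.append H e σ hout h3)

lemma eval_of_derives {R : Finset (ContextFreeRule α (Q H × FreeGroup (Fin n) × Q H))}
    (hR : ∀ r ∈ R, Eval H e σ r.output r.input.1 r.input.2.1 r.input.2.2)
    {u v : List (Symbol α (Q H × FreeGroup (Fin n) × Q H))}
    (h : Relation.ReflTransGen (fun u v => ∃ r ∈ R, r.Rewrites u v) u v)
    {q x q'} (he : Eval H e σ u q x q') : Eval H e σ v q x q' := by
  induction h with
  | refl => exact he
  | tail _ hs ih => exact eval_of_produces H e σ hR hs ih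

lemma eval_terminal {w : List α} :
    ∀ {q x q'}, Eval H e σ (w.map Symbol.terminal) q x q' →
    rep H q * σ (FreeMonoid.ofList w) = ((e.symm x : H) : G) * rep H q' := by
  induction w with
  | nil =>
    intro q x q' h
    cases h with
    | nil => simp [FreeMonoid.ofList_nil]
  | cons a w ih =>
    intro q x q' h
    cases h with
    | term a h' =>
      have hih := ih h'
      calc rep H q * σ (FreeMonoid.ofList (a :: w))
          = (rep H q * σ (FreeMonoid.of a)) * σ (FreeMonoid.ofList w) := by
            rw [FreeMonoid.ofList_cons, map_mul, mul_assoc]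
        _ = ((e.symm (xstep H e σ q a) : H) : G) *
              (rep H (mustep H σ q a) * σ (FreeMonoid.ofList w)) := by
            rw [rep_mul_of H e σ q a, mul_assoc]
        _ = ((e.symm (xstep H e σ q a) : H) : G) * (((e.symm _ : H) : G) * rep H q') := by
            rw [hih]
        _ = (((e.symm (xstep H e σ q a) * e.symm _ : H) : G)) * rep H q' := by
            push_cast
            rw [mul_assoc]
        _ = ((e.symm (xstep H e σ q a * _) : H) : G) * rep H q' := by rw [map_mul]

end GroupSetup

end MullerSchupp

open MullerSchupp

/-- Section 9 of the paper: every finitely generated group with a finitely generated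
free subgroup of finite index has a context-free word problem (with respect to any
choice of generators `σ : Σ* → G`). -/
theorem wordProblem_contextFree_of_virtually_free {α : Type} [Fintype α]
    {G : Type} [Group G]
    (H : Subgroup G) (hidx : H.FiniteIndex) (n : ℕ)
    (e : H ≃* FreeGroup (Fin n))
    (σ : FreeMonoid α →* G) (hσ : Function.Surjective σ) :
    Language.IsContextFree {w : List α | σ (FreeMonoid.ofList w) = 1} := by
  classical
  haveI := hidx
  haveI : Finite (Q H) :=
    Finite.of_equiv _ (QuotientGroup.quotientRightRelEquivQuotientLeftRel H).symm
  haveI : Fintype (Q H) := Fintype.ofFinite _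
  set C : ℕ := Finset.univ.sup (fun p : Q H × α => FreeGroup.norm (xstep H e σ p.1 p.2)) with hC
  have hxstep_le : ∀ q a, FreeGroup.norm (xstep H e σ q a) ≤ C := fun q a => by
    rw [hC]
    exact Finset.le_sup (f := fun p : Q H × α => FreeGroup.norm (xstep H e σ p.1 p.2))
      (Finset.mem_univ (q, a))
  have hballfin : {x : FreeGroup (Fin n) | FreeGroup.norm x ≤ 4 * C + 4}.Finite := by
    have hpre : {x : FreeGroup (Fin n) | FreeGroup.norm x ≤ 4 * C + 4}
        = FreeGroup.toWord ⁻¹' {l : List (Fin n × Bool) | l.length ≤ 4 * C + 4} := rfl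
    rw [hpre]
    exact Set.Finite.preimage (FreeGroup.toWord_injective.injOn)
      (List.finite_length_le _ (4 * C + 4))
  set ball : Finset (FreeGroup (Fin n)) := hballfin.toFinset with hball
  have mem_ball : ∀ {x : FreeGroup (Fin n)}, x ∈ ball ↔ FreeGroup.norm x ≤ 4 * C + 4 := by
    intro x
    rw [hball, Set.Finite.mem_toFinset]
    exact Iff.rfl
  set q₀ : Q H := qmk H 1 with hq₀
  refine ⟨⟨Q H × FreeGroup (Fin n) × Q H, (q₀, 1, q₀),
    rules H e σ Finset.univ Finset.univ ball⟩, ?_⟩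
  set g : ContextFreeGrammar α := ⟨Q H × FreeGroup (Fin n) × Q H, (q₀, 1, q₀),
    rules H e σ Finset.univ Finset.univ ball⟩ with hg
  have hrulesEval : ∀ r ∈ rules H e σ Finset.univ Finset.univ ball,
      Eval H e σ r.output r.input.1 r.input.2.1 r.input.2.2 :=
    fun r hr => eval_output_of_mem H e σ hr
  -- soundness
  have sound : ∀ w : List α, w ∈ g.language → σ (FreeMonoid.ofList w) = 1 := by
    intro w hw
    have hderiv : g.Derives [Symbol.nonterminal (q₀, 1, q₀)] (w.map Symbol.terminal) := hw
    have hev0 : Eval H e σ [Symbol.nonterminal (q₀, 1, q₀)] q₀ 1 q₀ := by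
      have h1 := Eval.nt (H := H) (e := e) (σ := σ) q₀ 1 q₀ (.nil q₀)
      rwa [mul_one] at h1
    have hev := eval_of_derives H e σ hrulesEval hderiv hev0
    have hfin := eval_terminal H e σ hev
    rw [map_one] at hfin
    simp only [OneMemClass.coe_one, one_mul] at hfin
    exact mul_eq_left.mp hfin
  -- completeness
  have complete : ∀ (m : ℕ) (w : List α), w.length = m →
      ∀ (q : Q H) (x : FreeGroup (Fin n)) (q' : Q H),
      FreeGroup.norm x ≤ 4 * C + 4 →
      rep H q * σ (FreeMonoid.ofList w) = ((e.symm x : H) : G) * rep H q' →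
      g.Derives [Symbol.nonterminal (q, x, q')] (w.map Symbol.terminal) := by
    intro m
    induction m using Nat.strong_induction_on with
    | _ m ih =>
    intro w hw q x q' hxK hsem
    rcases w with _ | ⟨a, w'⟩
    · -- empty word
      rw [FreeMonoid.ofList_nil, map_one, mul_one] at hsem
      have h1 : qmk H (rep H q) = qmk H (((e.symm x : H) : G) * rep H q') := by rw [hsem]
      rw [qmk_hmul, qmk_rep, qmk_rep] at h1
      subst h1
      have h2 : ((e.symm x : H) : G) = 1 := mul_eq_right.mp hsem.symm
      have h3 : e.symm x = 1 := by exact_mod_cast h2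
      have h4 : x = 1 := by
        have h5 := congrArg e h3
        rwa [MulEquiv.apply_symm_apply, map_one] at h5
      subst h4
      apply ContextFreeGrammar.Produces.single
      exact ⟨_, eps_rule_mem H e σ (Finset.mem_univ q),
        by simpa using ContextFreeRule.Rewrites.input_output⟩
    · rcases w' with _ | ⟨b, w''⟩
      · -- single letter
        rw [FreeMonoid.ofList_singleton] at hsem
        have heq : ((e.symm x : H) : G) * rep H q'
            = ((e.symm (xstep H e σ q a) : H) : G) * rep H (mustep H σ q a) := by
          rw [← hsem, rep_mul_of H e σ q a]
        have hq' : q' = mustep H σ q a := by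
          have h6 := congrArg (qmk H) heq
          rwa [qmk_hmul, qmk_hmul, qmk_rep, qmk_rep] at h6
        subst hq'
        have hx : x = xstep H e σ q a := by
          have h2 : ((e.symm x : H) : G) = ((e.symm (xstep H e σ q a) : H) : G) :=
            mul_right_cancel heq
          have h3 : e.symm x = e.symm (xstep H e σ q a) := Subtype.coe_injective h2
          have h5 := congrArg e h3
          rwa [MulEquiv.apply_symm_apply, MulEquiv.apply_symm_apply] at h5
        subst hx
        apply ContextFreeGrammar.Produces.single
        exact ⟨_, term_rule_mem H e σ (Finset.mem_univ q) (Finset.mem_univ a),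
          by simpa using ContextFreeRule.Rewrites.input_output⟩
      · -- at least two letters
        set wf : List α := a :: b :: w'' with hwf
        have hm2 : 2 ≤ wf.length := by simp [hwf]
        set p : ℕ → G := fun i => rep H q * σ (FreeMonoid.ofList (wf.take i)) with hp
        set ff : ℕ → FreeGroup (Fin n) := fun i => e (hpart H (p i)) with hff
        have hp0 : p 0 = rep H q := by
          simp [hp, FreeMonoid.ofList_nil]
        have hff0 : ff 0 = 1 := by
          rw [hff]
          simp only [hp0, hpart_rep]
          exact map_one e
        have hstep_eq : ∀ i (hi : i < wf.length),
            p (i + 1) = (((hpart H (p i) * e.symm (xstep H e σ (qmk H (p i)) (wf[i]'hi))) : H) : G)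
              * rep H (mustep H σ (qmk H (p i)) (wf[i]'hi)) := by
          intro i hi
          have ht : wf.take (i + 1) = wf.take i ++ [wf[i]'hi] :=
            (List.take_concat_get' wf i hi).symm
          have h1 : p (i + 1) = p i * σ (FreeMonoid.of (wf[i]'hi)) := by
            rw [hp]
            simp only
            rw [ht, FreeMonoid.ofList_append, FreeMonoid.ofList_singleton, map_mul, mul_assoc]
          rw [h1]
          conv_lhs => rw [← hpart_mul_rep H (p i)]
          rw [mul_assoc, rep_mul_of H e σ (qmk H (p i)) (wf[i]'hi)]
          push_cast
          rw [mul_assoc]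
        have hq_succ : ∀ i (hi : i < wf.length),
            qmk H (p (i + 1)) = mustep H σ (qmk H (p i)) (wf[i]'hi) := by
          intro i hi
          rw [hstep_eq i hi, qmk_hmul, qmk_rep]
        have hff_succ : ∀ i (hi : i < wf.length),
            ff (i + 1) = ff i * xstep H e σ (qmk H (p i)) (wf[i]'hi) := by
          intro i hi
          rw [hff]
          simp only
          rw [hstep_eq i hi, hpart_hmul, hpart_rep, mul_one, map_mul, MulEquiv.apply_symm_apply]
        have hnormstep : ∀ i, i < wf.length → FreeGroup.norm ((ff i)⁻¹ * ff (i + 1)) ≤ C := by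
          intro i hi
          rw [hff_succ i hi, inv_mul_cancel_left]
          exact hxstep_le _ _
        have hpm : p wf.length = ((e.symm x : H) : G) * rep H q' := by
          rw [hp]
          simp only [List.take_length]
          exact hsem
        have hffm : ff wf.length = x := by
          rw [hff]
          simp only [hpm]
          rw [hpart_hmul, hpart_rep, mul_one, MulEquiv.apply_symm_apply]
        have hqm : qmk H (p wf.length) = q' := by rw [hpm, qmk_hmul, qmk_rep]
        obtain ⟨i, hi1, him, hni, hnim⟩ := exists_split (C := C) wf.length ff hff0 hnormstep hm2
          (by rw [hffm]; exact hxK)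
        rw [hffm] at hnim
        set q'' : Q H := qmk H (p i) with hq''
        set x₁ : FreeGroup (Fin n) := ff i with hx₁
        set x₂ : FreeGroup (Fin n) := x₁⁻¹ * x with hx₂
        have hx12 : x₁ * x₂ = x := by rw [hx₂, mul_inv_cancel_left]
        have hsymm1 : (e.symm x₁ : H) = hpart H (p i) := by
          rw [hx₁, hff]
          simp only
          exact MulEquiv.symm_apply_apply e _
        have hsem1 : rep H q * σ (FreeMonoid.ofList (wf.take i))
            = ((e.symm x₁ : H) : G) * rep H q'' := by
          rw [hsymm1, hq'']
          exact (hpart_mul_rep H (p i)).symm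
        have hsem2 : rep H q'' * σ (FreeMonoid.ofList (wf.drop i))
            = ((e.symm x₂ : H) : G) * rep H q' := by
          have h1 : ((hpart H (p i) : H) : G) * (rep H q'' * σ (FreeMonoid.ofList (wf.drop i)))
              = ((e.symm x : H) : G) * rep H q' := by
            rw [← mul_assoc, hq'', hpart_mul_rep]
            show p i * σ (FreeMonoid.ofList (wf.drop i)) = _
            rw [hp]
            simp only
            rw [mul_assoc, ← map_mul, ← FreeMonoid.ofList_append, List.take_append_drop]
            exact hsem
          have h2 : rep H q'' * σ (FreeMonoid.ofList (wf.drop i))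
              = ((hpart H (p i) : H) : G)⁻¹ * (((e.symm x : H) : G) * rep H q') := by
            rw [← h1, inv_mul_cancel_left]
          have h3 : (e.symm x₂ : H) = (hpart H (p i))⁻¹ * e.symm x := by
            rw [hx₂, map_mul, map_inv, hsymm1]
          rw [h2, h3]
          push_cast
          rw [mul_assoc]
        have hb1 : x₁ ∈ ball := mem_ball.mpr hni
        have hb2 : x₂ ∈ ball := mem_ball.mpr (by rw [hx₂, hx₁]; exact hnim)
        have hn2 : FreeGroup.norm x₂ ≤ 4 * C + 4 := by rw [hx₂, hx₁]; exact hnim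
        have hrule := split_rule_mem H e σ (As := Finset.univ) (ball := ball)
          (Finset.mem_univ q) (Finset.mem_univ q') (Finset.mem_univ q'') hb1 hb2
        have hprod : g.Produces [Symbol.nonterminal (q, x, q')]
            [Symbol.nonterminal (q, x₁, q''), Symbol.nonterminal (q'', x₂, q')] := by
          refine ⟨_, hrule, ?_⟩
          rw [← hx12]
          exact ContextFreeRule.Rewrites.input_output
        have hlt1 : (wf.take i).length < m := by
          rw [List.length_take]
          omega
        have hlt2 : (wf.drop i).length < m := by
          rw [List.length_drop]
          omega
        have d1 := ih (wf.take i).length hlt1 (wf.take i) rfl q x₁ q'' hni hsem1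
        have d2 := ih (wf.drop i).length hlt2 (wf.drop i) rfl q'' x₂ q' hn2 hsem2
        refine hprod.trans_derives ?_
        have hsplitmap : (wf.take i).map
              (Symbol.terminal : α → Symbol α (Q H × FreeGroup (Fin n) × Q H))
              ++ (wf.drop i).map Symbol.terminal
            = wf.map Symbol.terminal := by
          rw [← List.map_append, List.take_append_drop]
        rw [← hsplitmap]
        have hlist : [(Symbol.nonterminal (q, x₁, q'') : Symbol α (Q H × FreeGroup (Fin n) × Q H)),
              Symbol.nonterminal (q'', x₂, q')]
            = [Symbol.nonterminal (q, x₁, q'')] ++ [Symbol.nonterminal (q'', x₂, q')] := rfl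
        rw [hlist]
        exact (d1.append_right _).trans (d2.append_left _)
  -- language equality
  ext w
  constructor
  · intro hw
    exact sound w hw
  · intro hw
    show w ∈ g.language
    rw [ContextFreeGrammar.mem_language_iff]
    have hsem0 : rep H q₀ * σ (FreeMonoid.ofList w) = ((e.symm 1 : H) : G) * rep H q₀ := by
      rw [hw, map_one, mul_one]
      simp
    exact complete w.length w rfl q₀ 1 q₀ (by simp) hsem0
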